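/- For any fixed real number r0 > 0, the series I_4(m, r0) tends to 0 as the integer m tends to infinity, where I_4(m, r0) = ∑_{k=1}^∞ (−1)^k · (r0/2)^{2k} · ((2m+2)/(2m+2k+2)) · ∑_{k1+k2=k, k1,k2 ≥ 0} Γ(m+1)² / (k1! · k2! · Γ(m+k1+1) · Γ(m+k2+1)). -/

import Mathlib

open Real Filter Topology

/-- `I₄(m, r₀)` from the paper:
`∑_{k=1}^∞ (−1)^k (r₀/2)^{2k} ((2m+2)/(2m+2k+2)) ·
  ∑_{k₁+k₂=k} Γ(m+1)² / (k₁! k₂! Γ(m+k₁+1) Γ(m+k₂+1))`. -/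
noncomputable def I4 (m : ℕ) (r0 : ℝ) : ℝ :=
  ∑' k : ℕ,
    (-1 : ℝ) ^ (k + 1) * (r0 / 2) ^ (2 * (k + 1)) *
      ((2 * (m : ℝ) + 2) / (2 * (m : ℝ) + 2 * ((k : ℝ) + 1) + 2)) *
      ∑ p ∈ Finset.HasAntidiagonal.antidiagonal (k + 1),
        Real.Gamma ((m : ℝ) + 1) ^ 2 /
          ((Nat.factorial p.1 : ℝ) * (Nat.factorial p.2 : ℝ) *
            Real.Gamma ((m : ℝ) + (p.1 : ℝ) + 1) * Real.Gamma ((m : ℝ) + (p.2 : ℝ) + 1))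

theorem I4_tendsto_zero (r0 : ℝ) (hr0 : 0 < r0) :
    Tendsto (fun m : ℕ => I4 m r0) atTop (𝓝 0) := by
  have key : ∀ᶠ m : ℕ in atTop, ‖I4 m r0‖ ≤ r0 ^ 2 / ((m : ℝ) + 1) := by
    filter_upwards [eventually_ge_atTop ⌈r0 ^ 2⌉₊] with m hm
    have hm' : r0 ^ 2 ≤ (m : ℝ) := by exact_mod_cast Nat.ceil_le.mp hm
    have hmpos : (0 : ℝ) < (m : ℝ) + 1 := by positivity
    set x : ℝ := r0 ^ 2 / (2 * ((m : ℝ) + 1)) with hxdef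
    have hx0 : 0 ≤ x := by positivity
    have hx2 : x ≤ 1 / 2 := by
      rw [hxdef, div_le_div_iff₀ (by positivity) (by norm_num)]
      linarith
    have hx1 : x < 1 := by linarith
    -- rewrite Gammas as factorials
    have hG : ∀ n : ℕ, Real.Gamma ((m : ℝ) + (n : ℝ) + 1) = ((m + n).factorial : ℝ) := by
      intro n
      rw [show (m : ℝ) + (n : ℝ) + 1 = ((m + n : ℕ) : ℝ) + 1 by push_cast; ring,
        Real.Gamma_nat_eq_factorial]
    have hG0 : Real.Gamma ((m : ℝ) + 1) = (m.factorial : ℝ) := Real.Gamma_nat_eq_factorial m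
    -- per-term bound
    have hbound : ∀ k : ℕ,
        ‖(-1 : ℝ) ^ (k + 1) * (r0 / 2) ^ (2 * (k + 1)) *
          ((2 * (m : ℝ) + 2) / (2 * (m : ℝ) + 2 * ((k : ℝ) + 1) + 2)) *
          ∑ p ∈ Finset.HasAntidiagonal.antidiagonal (k + 1),
            Real.Gamma ((m : ℝ) + 1) ^ 2 /
              ((Nat.factorial p.1 : ℝ) * (Nat.factorial p.2 : ℝ) *
                Real.Gamma ((m : ℝ) + (p.1 : ℝ) + 1) *
                Real.Gamma ((m : ℝ) + (p.2 : ℝ) + 1))‖ ≤ x ^ (k + 1) := by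
      intro k
      simp only [hG, hG0]
      set S : ℝ := ∑ p ∈ Finset.HasAntidiagonal.antidiagonal (k + 1),
          ((m.factorial : ℝ)) ^ 2 /
            ((Nat.factorial p.1 : ℝ) * (Nat.factorial p.2 : ℝ) *
              ((m + p.1).factorial : ℝ) * ((m + p.2).factorial : ℝ)) with hSdef
      set A : ℝ := (r0 / 2) ^ (2 * (k + 1)) with hAdef
      set B : ℝ := (2 * (m : ℝ) + 2) / (2 * (m : ℝ) + 2 * ((k : ℝ) + 1) + 2) with hBdef
      have hA0 : 0 ≤ A := by positivity
      have hB0 : 0 ≤ B := by positivity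
      have hB1 : B ≤ 1 := by
        rw [hBdef, div_le_one (by positivity)]
        have : (0 : ℝ) ≤ (k : ℝ) := Nat.cast_nonneg k
        linarith
      have hS0 : 0 ≤ S := by
        apply Finset.sum_nonneg
        intro p _
        positivity
      -- bound each summand of S
      have hSle : S ≤ ((k : ℝ) + 2) * (((m : ℝ) + 1)⁻¹) ^ (k + 1) := by
        have hcard := Finset.Nat.card_antidiagonal (k + 1)
        calc S ≤ ∑ _p ∈ Finset.HasAntidiagonal.antidiagonal (k + 1), (((m : ℝ) + 1)⁻¹) ^ (k + 1) := by
              apply Finset.sum_le_sum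
              intro p hp
              have hpk : p.1 + p.2 = k + 1 := Finset.HasAntidiagonal.mem_antidiagonal.mp hp
              have hfac : ∀ j : ℕ, (m.factorial : ℝ) * ((m : ℝ) + 1) ^ j ≤ ((m + j).factorial : ℝ) := by
                intro j
                exact_mod_cast Nat.cast_le.mpr (Nat.factorial_mul_pow_le_factorial (m := m) (n := j))
              have h1 : (1 : ℝ) ≤ (Nat.factorial p.1 : ℝ) := by
                exact_mod_cast Nat.one_le_iff_ne_zero.mpr (Nat.factorial_ne_zero p.1)
              have h2 : (1 : ℝ) ≤ (Nat.factorial p.2 : ℝ) := by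
                exact_mod_cast Nat.one_le_iff_ne_zero.mpr (Nat.factorial_ne_zero p.2)
              rw [inv_pow, inv_eq_one_div, div_le_div_iff₀ (by positivity) (by positivity)]
              have hmain : (m.factorial : ℝ) ^ 2 * ((m : ℝ) + 1) ^ (k + 1)
                  ≤ ((m + p.1).factorial : ℝ) * ((m + p.2).factorial : ℝ) := by
                calc (m.factorial : ℝ) ^ 2 * ((m : ℝ) + 1) ^ (k + 1)
                    = ((m.factorial : ℝ) * ((m : ℝ) + 1) ^ p.1) *
                      ((m.factorial : ℝ) * ((m : ℝ) + 1) ^ p.2) := by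
                      rw [← hpk]; ring
                  _ ≤ ((m + p.1).factorial : ℝ) * ((m + p.2).factorial : ℝ) := by
                      apply mul_le_mul (hfac p.1) (hfac p.2) (by positivity) (by positivity)
              calc (m.factorial : ℝ) ^ 2 * ((m : ℝ) + 1) ^ (k + 1)
                  ≤ ((m + p.1).factorial : ℝ) * ((m + p.2).factorial : ℝ) := hmain
                _ ≤ 1 * ((Nat.factorial p.1 : ℝ) * (Nat.factorial p.2 : ℝ) *
                    ((m + p.1).factorial : ℝ) * ((m + p.2).factorial : ℝ)) := by
                    rw [one_mul]
                    have ha : (0 : ℝ) < ((m + p.1).factorial : ℝ) :=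
                      (Nat.cast_pos (α := ℝ)).mpr (Nat.factorial_pos (m + p.1))
                    have hb : (0 : ℝ) < ((m + p.2).factorial : ℝ) :=
                      (Nat.cast_pos (α := ℝ)).mpr (Nat.factorial_pos (m + p.2))
                    have h12 : (1 : ℝ) ≤ (Nat.factorial p.1 : ℝ) * (Nat.factorial p.2 : ℝ) := by
                      nlinarith
                    nlinarith [mul_pos ha hb]
          _ = ((k : ℝ) + 2) * (((m : ℝ) + 1)⁻¹) ^ (k + 1) := by
              rw [Finset.sum_const, hcard, nsmul_eq_mul]
              push_cast
              ring
      have habs : ‖(-1 : ℝ) ^ (k + 1) * A * B * S‖ = A * B * S := by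
        rw [Real.norm_eq_abs, abs_mul, abs_mul, abs_mul, abs_pow, abs_neg, abs_one, one_pow,
          one_mul, abs_of_nonneg hA0, abs_of_nonneg hB0, abs_of_nonneg hS0]
      rw [habs]
      have hk2 : ((k : ℝ) + 2) ≤ 2 ^ (k + 1) := by
        have h : k + 2 ≤ 2 ^ (k + 1) := Nat.succ_le_of_lt (Nat.lt_two_pow_self (n := k + 1))
        exact_mod_cast Nat.cast_le.mpr h
      calc A * B * S ≤ A * 1 * (((k : ℝ) + 2) * (((m : ℝ) + 1)⁻¹) ^ (k + 1)) := by
            apply mul_le_mul (mul_le_mul_of_nonneg_left hB1 hA0) hSle hS0 (by positivity)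
        _ ≤ A * 1 * ((2 : ℝ) ^ (k + 1) * (((m : ℝ) + 1)⁻¹) ^ (k + 1)) := by
            apply mul_le_mul_of_nonneg_left _ (by positivity)
            apply mul_le_mul_of_nonneg_right hk2 (by positivity)
        _ = x ^ (k + 1) := by
            rw [hAdef, mul_one, pow_mul, ← mul_pow, ← mul_pow]
            congr 1
            rw [hxdef]
            field_simp
    -- summability of the geometric bound
    have hgsum : Summable fun k : ℕ => x ^ (k + 1) := by
      have := summable_geometric_of_lt_one hx0 hx1
      simpa [pow_succ'] using this.mul_left x
    have hnorm : ‖I4 m r0‖ ≤ ∑' k : ℕ, x ^ (k + 1) :=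
      tsum_of_norm_bounded hgsum.hasSum hbound
    have htsum : ∑' k : ℕ, x ^ (k + 1) = x * (1 - x)⁻¹ := by
      calc ∑' k : ℕ, x ^ (k + 1) = ∑' k : ℕ, x * x ^ k := by
            simp [pow_succ']
        _ = x * ∑' k : ℕ, x ^ k := tsum_mul_left
        _ = x * (1 - x)⁻¹ := by rw [tsum_geometric_of_lt_one hx0 hx1]
    have hfin : x * (1 - x)⁻¹ ≤ r0 ^ 2 / ((m : ℝ) + 1) := by
      have h1x : (1 : ℝ) / 2 ≤ 1 - x := by linarith
      have hinv : (1 - x)⁻¹ ≤ 2 := by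
        rw [inv_le_iff_one_le_mul₀ (by linarith)]
        linarith [mul_le_mul_of_nonneg_right h1x (by norm_num : (0:ℝ) ≤ 2)]
      calc x * (1 - x)⁻¹ ≤ x * 2 := mul_le_mul_of_nonneg_left hinv hx0
        _ = r0 ^ 2 / ((m : ℝ) + 1) := by rw [hxdef]; field_simp
    calc ‖I4 m r0‖ ≤ ∑' k : ℕ, x ^ (k + 1) := hnorm
      _ = x * (1 - x)⁻¹ := htsum
      _ ≤ r0 ^ 2 / ((m : ℝ) + 1) := hfin
  have h0 : Tendsto (fun m : ℕ => r0 ^ 2 / ((m : ℝ) + 1)) atTop (𝓝 0) := by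
    have := tendsto_one_div_add_atTop_nhds_zero_nat.const_mul (r0 ^ 2)
    simpa [mul_one_div, div_eq_mul_inv] using this
  exact squeeze_zero_norm' key h0
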